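/- Let K be a perfect field of characteristic 2, W a finite-dimensional K-vector space, and M a subspace of symmetric bilinear forms on W in which every nonzero element is nondegenerate (rank dim W). If dim M = dim W, then M contains no nonzero alternating form. -/

import Mathlib

open Module Finset in
/-- In characteristic two, a double sum of a symmetric array equals its diagonal sum. -/
lemma sum_sym_diag_aux {K : Type*} [Field K] [CharP K 2] {m : ℕ} (t : Fin m → Fin m → K)
    (hsym : ∀ i j, t i j = t j i) : ∑ i, ∑ j, t i j = ∑ i, t i i := by
  classical
  rw [← Finset.sum_product']
  rw [← Finset.diag_union_offDiag (Finset.univ : Finset (Fin m)),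
    Finset.sum_union (Finset.disjoint_diag_offDiag _), Finset.sum_diag]
  have hoff : ∑ p ∈ (Finset.univ : Finset (Fin m)).offDiag, t p.1 p.2 = 0 := by
    apply Finset.sum_involution (fun p _ => Prod.swap p)
    · intro p _
      show t p.1 p.2 + t p.2 p.1 = 0
      rw [hsym p.2 p.1]
      exact CharTwo.add_self_eq_zero _
    · intro p hp _
      rw [Finset.mem_offDiag] at hp
      intro h
      exact hp.2.2 ((Prod.ext_iff.mp h).1).symm
    · intro p hp
      rw [Finset.mem_offDiag] at hp ⊢
      exact ⟨Finset.mem_univ _, Finset.mem_univ _, Ne.symm hp.2.2⟩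
    · intro p _
      rfl
  rw [hoff, add_zero]

/-- over a perfect field of characteristic 2, a subspace `M` of symmetric
bilinear forms on `W` with `dim M = dim W` all of whose nonzero elements are
nondegenerate contains no nonzero alternating form. -/
theorem stmt14 (K : Type*) [Field K] [CharP K 2] (hperf : ∀ x : K, ∃ y : K, y ^ 2 = x)
    (W : Type*) [AddCommGroup W] [Module K W] [FiniteDimensional K W]
    (M : Submodule K (W →ₗ[K] W →ₗ[K] K))
    (hsymm : ∀ f ∈ M, ∀ x y : W, f x y = f y x)
    (hnd : ∀ f ∈ M, f ≠ 0 → LinearMap.ker f = ⊥)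
    (hdim : Module.finrank K ↥M = Module.finrank K W) :
    ∀ f ∈ M, (∀ x : W, f x x = 0) → f = 0 := by
  classical
  letI : AddCommGroup M := Submodule.addCommGroup (R := K) (M := W →ₗ[K] W →ₗ[K] K) M
  intro f hfM hf
  by_contra hf0
  set n := Module.finrank K W with hn
  -- Step 1: for every nonzero `w`, evaluation at `w` is a surjection `M → W*`.
  have hev : ∀ w : W, w ≠ 0 → ∀ ℓ : W →ₗ[K] K, ∃ g ∈ M, (g : W →ₗ[K] W →ₗ[K] K) w = ℓ := by
    intro w hw
    let e : M →ₗ[K] (W →ₗ[K] K) :=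
      { toFun := fun g => (g : W →ₗ[K] W →ₗ[K] K) w
        map_add' := fun a b => rfl
        map_smul' := fun c a => rfl }
    have h0 : ∀ g : M, e g = 0 → g = 0 := by
      intro g hg
      by_contra hg0
      have hgne : (g : W →ₗ[K] W →ₗ[K] K) ≠ 0 := by
        intro h
        exact hg0 (Subtype.ext h)
      have hker := hnd g g.2 hgne
      have hwk : w ∈ LinearMap.ker (g : W →ₗ[K] W →ₗ[K] K) := hg
      rw [hker, Submodule.mem_bot] at hwk
      exact hw hwk
    have hinj : Function.Injective e := by
      intro g1 g2 hgg
      have := h0 (g1 - g2) (by have h3 := map_sub e g1 g2; rw [h3, hgg, sub_self])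
      exact sub_eq_zero.mp this
    have hfr : Module.finrank K ↥M = Module.finrank K (W →ₗ[K] K) := by
      rw [hdim]
      exact (Subspace.dual_finrank_eq (K := K) (V := W)).symm
    have hsurj : Function.Surjective e :=
      (LinearMap.injective_iff_surjective_of_finrank_eq_finrank hfr).mp hinj
    intro ℓ
    obtain ⟨g, hg⟩ := hsurj ℓ
    exact ⟨g, g.2, hg⟩
  -- Step 2: for every nonzero `w`, some `g ∈ M` has `g w w ≠ 0`.
  have hZ : ∀ w : W, w ≠ 0 → ∃ g ∈ M, (g : W →ₗ[K] W →ₗ[K] K) w w ≠ 0 := by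
    intro w hw
    obtain ⟨ℓ, hℓ⟩ : ∃ ℓ : Module.Dual K W, ℓ w ≠ 0 := by
      by_contra h
      push_neg at h
      exact hw ((Module.forall_dual_apply_eq_zero_iff K w).mp h)
    obtain ⟨g, hgM, hg⟩ := hev w hw ℓ
    exact ⟨g, hgM, by rw [hg]; exact hℓ⟩
  -- Step 3: the quadratic-diagonal expansion.
  have hq : ∀ g ∈ M, ∀ (c : Fin n → K) (v : Fin n → W),
      (g : W →ₗ[K] W →ₗ[K] K) (∑ i, c i • v i) (∑ i, c i • v i)
        = ∑ i, c i * c i * g (v i) (v i) := by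
    intro g hgM c v
    have expand : (g : W →ₗ[K] W →ₗ[K] K) (∑ i, c i • v i) (∑ i, c i • v i)
        = ∑ i, ∑ j, c i * c j * g (v i) (v j) := by
      simp only [map_sum, map_smul, LinearMap.sum_apply, LinearMap.smul_apply, smul_eq_mul,
        Finset.mul_sum, Finset.sum_apply]
      rw [Finset.sum_comm]
      refine Finset.sum_congr rfl fun i _ => Finset.sum_congr rfl fun j _ => by ring
    rw [expand]
    exact sum_sym_diag_aux (fun i j => c i * c j * g (v i) (v j))
      (fun i j => show c i * c j * g (v i) (v j) = c j * c i * g (v j) (v i) by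
        rw [hsymm g hgM (v i) (v j)]; ring)
  -- The diagonal-evaluation linear map `L : M → K^n`.
  let b := Module.finBasis K W
  let L : M →ₗ[K] (Fin n → K) :=
    { toFun := fun g => fun i => (g : W →ₗ[K] W →ₗ[K] K) (b i) (b i)
      map_add' := fun a c => rfl
      map_smul' := fun c a => rfl }
  -- Step 4: `L` is surjective.
  have hLsurj : Function.Surjective L := by
    rw [← LinearMap.range_eq_top]
    by_contra hne
    have hlt : LinearMap.range L < ⊤ := lt_top_iff_ne_top.mpr hne
    obtain ⟨φ, hφ0, hφ⟩ := Submodule.exists_dual_map_eq_bot_of_lt_top hlt inferInstance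
    -- write φ via the coefficients a i
    set a : Fin n → K := fun i => φ (Pi.single i 1) with ha
    have hφv : ∀ v : Fin n → K, φ v = ∑ i, v i * a i := by
      intro v
      conv_lhs => rw [← Finset.univ_sum_single v]
      rw [map_sum]
      refine Finset.sum_congr rfl fun i _ => ?_
      have hsingle : Pi.single i (v i) = v i • (Pi.single i (1 : K) : Fin n → K) := by
        funext j
        simp [Pi.single_apply, mul_ite]
      rw [hsingle, map_smul, smul_eq_mul]
    have hane : a ≠ 0 := by
      intro h
      apply hφ0
      apply LinearMap.ext
      intro v
      show φ v = 0
      rw [hφv v, h]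
      simp
    -- take square roots
    have hc : ∀ i, ∃ y : K, y ^ 2 = a i := fun i => hperf (a i)
    choose c hc2 using hc
    have hcne : c ≠ 0 := by
      intro h
      apply hane
      funext i
      rw [← hc2 i, congrFun h i]
      simp
    set w : W := ∑ i, c i • b i with hwdef
    have hwne : w ≠ 0 := by
      intro h
      apply hcne
      have h2 : b.equivFun.symm c = 0 := by rw [Module.Basis.equivFun_symm_apply]; exact h
      exact b.equivFun.symm.injective (h2.trans (map_zero _).symm)
    obtain ⟨g, hgM, hgne⟩ := hZ w hwne
    apply hgne
    have hgw : (g : W →ₗ[K] W →ₗ[K] K) w w = ∑ i, a i * g (b i) (b i) := by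
      rw [hwdef, hq g hgM c b]
      apply Finset.sum_congr rfl
      intro i _
      rw [← hc2 i]
      ring
    rw [hgw]
    have hmem : L ⟨g, hgM⟩ ∈ LinearMap.range L := LinearMap.mem_range_self L _
    have hz : φ (L ⟨g, hgM⟩) = 0 := by
      have hm2 := Submodule.mem_map_of_mem (f := φ) hmem
      rw [hφ] at hm2
      exact (Submodule.mem_bot K).mp hm2
    rw [hφv] at hz
    rw [← hz]
    apply Finset.sum_congr rfl
    intro i _
    simp only [L, LinearMap.coe_mk, AddHom.coe_mk]
    ring
  -- Step 5: `L` is injective, contradicting `f` being a nonzero alternating form.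
  have hfr2 : Module.finrank K ↥M = Module.finrank K (Fin n → K) := by
    rw [hdim, hn]
    simp
  have hLinj : Function.Injective L :=
    (LinearMap.injective_iff_surjective_of_finrank_eq_finrank hfr2).mpr hLsurj
  have hLf : L ⟨f, hfM⟩ = 0 := by
    funext i
    exact hf (b i)
  have : (⟨f, hfM⟩ : M) = 0 := hLinj (by rw [hLf]; exact (map_zero L).symm)
  exact hf0 (congrArg Subtype.val this)
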